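/- For all nonnegative integers n, r, every real w > 0, and every nonzero integer m, the Laplace integrals satisfy |I_{r,n}(w + 2πim)| ≤ (w/√(w² + 4π²m²))^{r+1} · I_{r,n}(w). -/

import Mathlib

open MeasureTheory Set Filter Complex

lemma J_integrable (s : ℕ) {z : ℂ} (hz : 0 < z.re) :
    IntegrableOn (fun ξ : ℝ => (ξ:ℂ)^s * Complex.exp (-(ξ:ℂ)*z)) (Set.Ioi (0:ℝ)) := by
  have hcont : ContinuousOn (fun ξ : ℝ => (ξ:ℂ)^s * Complex.exp (-(ξ:ℂ)*z)) (Set.Ici 0) := by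
    fun_prop
  have ho : (fun ξ : ℝ => (ξ:ℂ)^s * Complex.exp (-(ξ:ℂ)*z)) =O[atTop]
      fun x => Real.exp (-(z.re/2) * x) := by
    rw [Asymptotics.isBigO_iff]
    refine ⟨1, ?_⟩
    have ht := tendsto_rpow_mul_exp_neg_mul_atTop_nhds_zero s (z.re/2) (half_pos hz)
    filter_upwards [ht.eventually_le_const one_pos, eventually_ge_atTop (0:ℝ)] with x h1 h0
    have hnorm : ‖(x:ℂ)^s * Complex.exp (-(x:ℂ)*z)‖ = x^s * Real.exp (-(z.re) * x) := by
      rw [norm_mul, norm_pow, Complex.norm_real, Real.norm_of_nonneg h0, Complex.norm_exp]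
      congr 2
      simp [Complex.mul_re]
      ring
    rw [hnorm, Real.norm_of_nonneg (Real.exp_pos _).le, one_mul]
    have hsplit : Real.exp (-(z.re) * x) = Real.exp (-(z.re/2) * x) * Real.exp (-(z.re/2) * x) := by
      rw [← Real.exp_add]; ring_nf
    rw [hsplit, ← mul_assoc]
    have hx : x ^ s * Real.exp (-(z.re/2) * x) ≤ 1 := by
      calc x ^ s * Real.exp (-(z.re/2) * x) = x ^ (s:ℝ) * Real.exp (-(z.re/2) * x) := by
            rw [Real.rpow_natCast]
        _ ≤ 1 := h1
    calc x ^ s * Real.exp (-(z.re/2) * x) * Real.exp (-(z.re/2) * x)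
        ≤ 1 * Real.exp (-(z.re/2) * x) := by
          exact mul_le_mul_of_nonneg_right hx (Real.exp_pos _).le
      _ = Real.exp (-(z.re/2) * x) := one_mul _
  refine Iff.mp integrableOn_Ici_iff_integrableOn_Ioi ?_
  exact (hcont.locallyIntegrableOn measurableSet_Ici).integrableOn_of_isBigO_atTop ho
    ⟨Ioi (z.re/2), Ioi_mem_atTop _, exp_neg_integrableOn_Ioi _ (half_pos hz)⟩

lemma exp_hasDerivAt (z : ℂ) (ξ : ℝ) :
    HasDerivAt (fun t : ℝ => Complex.exp (-(t:ℂ)*z)) (-z * Complex.exp (-(ξ:ℂ)*z)) ξ := by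
  have h1 : HasDerivAt (fun t : ℝ => -(t:ℂ)*z) (-z) ξ := by
    simpa using ((Complex.ofRealCLM.hasDerivAt (x := ξ)).neg.mul_const z)
  simpa [mul_comm] using h1.cexp

lemma tendsto_pow_exp_zero (s : ℕ) {z : ℂ} (hz : 0 < z.re) :
    Tendsto (fun ξ : ℝ => (ξ:ℂ)^s * Complex.exp (-(ξ:ℂ)*z)) atTop (nhds 0) := by
  rw [tendsto_zero_iff_norm_tendsto_zero]
  have ht := tendsto_rpow_mul_exp_neg_mul_atTop_nhds_zero s z.re hz
  refine ht.congr' ?_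
  filter_upwards [eventually_ge_atTop (0:ℝ)] with x h0
  rw [norm_mul, norm_pow, Complex.norm_real, Real.norm_of_nonneg h0,
    Complex.norm_exp, ← Real.rpow_natCast]
  congr 2
  simp [Complex.mul_re]
  ring

lemma J_eq (s : ℕ) {z : ℂ} (hz : 0 < z.re) :
    ∫ ξ in Set.Ioi (0:ℝ), (ξ:ℂ)^s * Complex.exp (-(ξ:ℂ)*z)
      = (s.factorial : ℂ) / z^(s+1) := by
  have hz0 : z ≠ 0 := fun h => by simp [h] at hz
  induction s with
  | zero =>
    have hF : ∀ ξ ∈ Set.Ioi (0:ℝ), HasDerivAt (fun t : ℝ => -Complex.exp (-(t:ℂ)*z)/z)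
        (Complex.exp (-(ξ:ℂ)*z)) ξ := by
      intro ξ _
      have := ((exp_hasDerivAt z ξ).neg).div_const z
      convert this using 1
      · rfl
      · rfl
      field_simp
    have hint : IntegrableOn (fun ξ : ℝ => Complex.exp (-(ξ:ℂ)*z)) (Set.Ioi (0:ℝ)) := by
      simpa using J_integrable 0 hz
    have htend : Tendsto (fun ξ : ℝ => -Complex.exp (-(ξ:ℂ)*z)/z) atTop (nhds 0) := by
      have := ((tendsto_pow_exp_zero 0 hz).neg).div_const z
      simpa using this
    have := integral_Ioi_of_hasDerivAt_of_tendsto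
      (f := fun t : ℝ => -Complex.exp (-(t:ℂ)*z)/z)
      (f' := fun ξ : ℝ => Complex.exp (-(ξ:ℂ)*z)) (a := 0)
      ((((Complex.continuous_exp.comp (by fun_prop)).neg).div_const z).continuousWithinAt) hF hint htend
    simp at this
    simpa using this.trans (by field_simp)
  | succ s ih =>
    -- G ξ = -(ξ^ (s+1)) * exp(-ξ z) / z
    set G : ℝ → ℂ := fun t => -((t:ℂ)^(s+1) * Complex.exp (-(t:ℂ)*z))/z with hG
    have hGderiv : ∀ ξ ∈ Set.Ioi (0:ℝ), HasDerivAt G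
        ((ξ:ℂ)^(s+1) * Complex.exp (-(ξ:ℂ)*z)
          - ((s:ℂ)+1)/z * ((ξ:ℂ)^s * Complex.exp (-(ξ:ℂ)*z))) ξ := by
      intro ξ _
      have hp : HasDerivAt (fun t : ℝ => (t:ℂ)^(s+1)) (((s:ℂ)+1) * (ξ:ℂ)^s) ξ := by
        have := (hasDerivAt_pow (s+1) ((ξ:ℝ):ℂ)).comp_ofReal
        simpa using this
      have := ((hp.mul (exp_hasDerivAt z ξ)).neg).div_const z
      convert this using 1
      · rfl
      · rfl
      field_simp
      try ring
    have hint1 := J_integrable (s+1) hz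
    have hint0 := (J_integrable s hz).const_mul (((s:ℂ)+1)/z)
    have htend : Tendsto G atTop (nhds 0) := by
      have := ((tendsto_pow_exp_zero (s+1) hz).neg).div_const z
      simpa [hG, neg_mul] using this
    have hcont : ContinuousWithinAt G (Set.Ici 0) 0 := by
      have : Continuous G := by
        rw [hG]
        exact (((continuous_ofReal.pow (s+1)).mul (Complex.continuous_exp.comp (by fun_prop))).neg).div_const z
      exact this.continuousWithinAt
    have key := integral_Ioi_of_hasDerivAt_of_tendsto hcont hGderiv
      (by exact hint1.sub hint0) htend
    rw [integral_sub hint1 hint0, integral_const_mul, ih] at key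
    have hG0 : G 0 = 0 := by simp [hG]
    rw [hG0, sub_zero] at key
    have : ∫ ξ in Set.Ioi (0:ℝ), (ξ:ℂ)^(s+1) * Complex.exp (-(ξ:ℂ)*z)
        = ((s:ℂ)+1)/z * ((s.factorial:ℂ) / z^(s+1)) := by linear_combination key
    rw [this, Nat.factorial_succ, div_mul_div_comm, ← pow_succ']
    push_cast
    ring

noncomputable def lapI (r n : ℕ) (z : ℂ) : ℂ :=
  ∫ ξ in Set.Ioi (0 : ℝ),
    Complex.exp (-(ξ : ℂ) * z) * (ξ : ℂ) ^ r * (((ξ : ℂ) + 1) ^ n + ((ξ : ℂ) - 1) ^ n)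

/-- the nonnegative real coefficients -/
noncomputable def lapC (n k : ℕ) : ℝ := (1 + (-1:ℝ)^(n-k)) * (n.choose k)

lemma lapC_nonneg (n k : ℕ) : 0 ≤ lapC n k := by
  unfold lapC
  apply mul_nonneg _ (by positivity)
  rcases Nat.even_or_odd (n-k) with h | h
  · rw [h.neg_one_pow]; norm_num
  · rw [h.neg_one_pow]; norm_num

lemma poly_expand (n : ℕ) (x : ℂ) :
    (x+1)^n + (x-1)^n = ∑ k ∈ Finset.range (n+1), (lapC n k : ℂ) * x^k := by
  rw [show x - 1 = x + (-1) by ring, add_pow, add_pow, ← Finset.sum_add_distrib]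
  refine Finset.sum_congr rfl fun k _ => ?_
  unfold lapC
  push_cast
  ring

lemma lapI_eq (r n : ℕ) {z : ℂ} (hz : 0 < z.re) :
    lapI r n z = ∑ k ∈ Finset.range (n+1),
      (lapC n k : ℂ) * ((r+k).factorial / z^(r+k+1)) := by
  unfold lapI
  have h1 : ∀ ξ : ℝ, Complex.exp (-(ξ:ℂ)*z) * (ξ:ℂ)^r * (((ξ:ℂ)+1)^n + ((ξ:ℂ)-1)^n)
      = ∑ k ∈ Finset.range (n+1), (lapC n k : ℂ) * ((ξ:ℂ)^(r+k) * Complex.exp (-(ξ:ℂ)*z)) := by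
    intro ξ
    rw [poly_expand, Finset.mul_sum]
    refine Finset.sum_congr rfl fun k _ => ?_
    rw [pow_add]
    ring
  simp_rw [h1]
  rw [integral_finset_sum _ (fun k _ => ((J_integrable (r+k) hz).const_mul _))]
  exact Finset.sum_congr rfl fun k _ => by rw [integral_const_mul, J_eq (r+k) hz]

theorem lapI_bound (n r : ℕ) (w : ℝ) (hw : 0 < w) (m : ℤ) (hm : m ≠ 0) :
    ‖lapI r n ((w : ℂ) + 2 * Real.pi * (m : ℂ) * Complex.I)‖ ≤
      (w / Real.sqrt (w ^ 2 + 4 * Real.pi ^ 2 * (m : ℝ) ^ 2)) ^ (r + 1) *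
        (lapI r n (w : ℂ)).re := by
  set z : ℂ := (w : ℂ) + 2 * Real.pi * (m : ℂ) * Complex.I with hzdef
  set A : ℝ := Real.sqrt (w ^ 2 + 4 * Real.pi ^ 2 * (m : ℝ) ^ 2) with hA
  have hzre : z.re = w := by simp [hzdef]
  have hzre' : (0:ℝ) < z.re := by rw [hzre]; exact hw
  have hzim : z.im = 2 * Real.pi * m := by simp [hzdef]
  have habs : ‖z‖ = A := by
    rw [Complex.norm_def, Complex.normSq_apply, hzre, hzim, hA]
    congr 1
    ring
  have hwA : w ≤ A := by
    rw [hA]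
    refine (Real.le_sqrt' hw).mpr ?_
    nlinarith [sq_nonneg (Real.pi * (m:ℝ))]
  have hA0 : (0:ℝ) < A := lt_of_lt_of_le hw hwA
  have hrhs : (lapI r n (w:ℂ)).re
      = ∑ k ∈ Finset.range (n+1), lapC n k * ((r+k).factorial / w^(r+k+1)) := by
    have : lapI r n (w:ℂ)
        = ((∑ k ∈ Finset.range (n+1), lapC n k * ((r+k).factorial / w^(r+k+1)) : ℝ) : ℂ) := by
      rw [lapI_eq r n (by simpa using hw)]
      push_cast
      rfl
    rw [this, Complex.ofReal_re]
  rw [hrhs, lapI_eq r n hzre']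
  calc ‖∑ k ∈ Finset.range (n+1), (lapC n k : ℂ) * ((r+k).factorial / z^(r+k+1))‖
      ≤ ∑ k ∈ Finset.range (n+1), lapC n k * ((r+k).factorial / A^(r+k+1)) := by
        refine (norm_sum_le _ _).trans_eq ?_
        refine Finset.sum_congr rfl fun k _ => ?_
        rw [norm_mul, norm_div, norm_pow, habs, Complex.norm_real,
          Real.norm_of_nonneg (lapC_nonneg n k), Complex.norm_natCast]
    _ ≤ (w / A) ^ (r + 1) * ∑ k ∈ Finset.range (n+1), lapC n k * ((r+k).factorial / w^(r+k+1)) := by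
        rw [Finset.mul_sum]
        refine Finset.sum_le_sum fun k _ => ?_
        have key : (w/A)^(r+k+1) ≤ (w/A)^(r+1) :=
          pow_le_pow_of_le_one (div_nonneg hw.le hA0.le) ((div_le_one hA0).mpr hwA) (by omega)
        have hX : (0:ℝ) ≤ ((r+k).factorial : ℝ) / w^(r+k+1) := by positivity
        have h1 : lapC n k * (((r+k).factorial : ℝ)/A^(r+k+1))
            = lapC n k * ((w/A)^(r+k+1) * (((r+k).factorial : ℝ)/w^(r+k+1))) := by
          rw [div_pow]
          field_simp
        rw [h1, show (w/A)^(r+1) * (lapC n k * (((r+k).factorial : ℝ)/w^(r+k+1)))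
            = lapC n k * ((w/A)^(r+1) * (((r+k).factorial : ℝ)/w^(r+k+1))) by ring]
        exact mul_le_mul_of_nonneg_left (mul_le_mul_of_nonneg_right key hX) (lapC_nonneg n k)
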